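/- Let w : ℤ → A be an infinite word over a finite alphabet. If p_w(n) ≤ n for some n ≥ 1, then w is periodic, i.e., there exists k ≥ 1 with w_{i+k} = w_i for all i ∈ ℤ. -/

import Mathlib

/-- The set of `n`-factors of a two-sided infinite word `w`. -/
def factorsZ {A : Type*} (w : ℤ → A) (n : ℕ) : Set (Fin n → A) :=
  {u | ∃ k : ℤ, ∀ i : Fin n, u i = w (k + (i : ℤ))}

/-- The complexity function of a two-sided infinite word. -/
noncomputable def complexityZ {A : Type*} (w : ℤ → A) (n : ℕ) : ℕ :=
  Nat.card (factorsZ w n)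

/-- `u` occurs in the length-`M` window of `w` starting at `k`. -/
def OccursIn {A : Type*} (w : ℤ → A) {n : ℕ} (u : Fin n → A) (k : ℤ) (M : ℕ) : Prop :=
  ∃ j : ℤ, k ≤ j ∧ j + (n : ℤ) ≤ k + (M : ℤ) ∧ ∀ i : Fin n, u i = w (j + (i : ℤ))

/-- `M` is a recurrence bound for length-`n` factors of `w`. -/
def IsRecurrenceBound {A : Type*} (w : ℤ → A) (n M : ℕ) : Prop :=
  ∀ u ∈ factorsZ w n, ∀ k : ℤ, OccursIn w u k M

def UniformlyRecurrent {A : Type*} (w : ℤ → A) : Prop :=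
  ∀ n : ℕ, ∃ M : ℕ, IsRecurrenceBound w n M

/-- The recurrence function of `w`. -/
noncomputable def recurrenceFn {A : Type*} (w : ℤ → A) (n : ℕ) : ℕ :=
  sInf {M | IsRecurrenceBound w n M}

def PeriodicWord {A : Type*} (w : ℤ → A) : Prop :=
  ∃ k : ℤ, 1 ≤ k ∧ ∀ i : ℤ, w (i + k) = w i

/-- The `i`-th power of the shift: `(shiftFun i y) t = y (t + i)`. -/
def shiftFun {A : Type*} (i : ℤ) (y : ℤ → A) : ℤ → A := fun t => y (t + i)

/-- Image of a set of words under the `i`-th power of the shift. -/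
def shiftSet {A : Type*} (i : ℤ) (W : Set (ℤ → A)) : Set (ℤ → A) := shiftFun i '' W

namespace MHaux

variable {A : Type*}

/-- The window of length `m` starting at `k`. -/
def windowZ (w : ℤ → A) (m : ℕ) (k : ℤ) : Fin m → A := fun i => w (k + (i : ℤ))

lemma mem_factorsZ_iff {w : ℤ → A} {m : ℕ} {u : Fin m → A} :
    u ∈ factorsZ w m ↔ ∃ k : ℤ, u = windowZ w m k := by
  constructor
  · rintro ⟨k, hk⟩; exact ⟨k, funext fun i => hk i⟩
  · rintro ⟨k, rfl⟩; exact ⟨k, fun i => rfl⟩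

lemma windowZ_mem (w : ℤ → A) (m : ℕ) (k : ℤ) : windowZ w m k ∈ factorsZ w m :=
  mem_factorsZ_iff.mpr ⟨k, rfl⟩

def dropLast {m : ℕ} (u : Fin (m + 1) → A) : Fin m → A := fun i => u i.castSucc
def dropFirst {m : ℕ} (u : Fin (m + 1) → A) : Fin m → A := fun i => u i.succ

lemma dropLast_window (w : ℤ → A) (m : ℕ) (k : ℤ) :
    dropLast (windowZ w (m + 1) k) = windowZ w m k := by
  funext i; simp [dropLast, windowZ]

lemma dropFirst_window (w : ℤ → A) (m : ℕ) (k : ℤ) :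
    dropFirst (windowZ w (m + 1) k) = windowZ w m (k + 1) := by
  funext i
  simp only [dropFirst, windowZ, Fin.val_succ]
  congr 1
  push_cast
  ring

/-- dropLast as a map between factor sets. -/
def ΦL (w : ℤ → A) (m : ℕ) (u : factorsZ w (m + 1)) : factorsZ w m :=
  ⟨dropLast u.1, by
    obtain ⟨k, hk⟩ := mem_factorsZ_iff.mp u.2
    rw [hk, dropLast_window]; exact windowZ_mem w m k⟩

def ΦR (w : ℤ → A) (m : ℕ) (u : factorsZ w (m + 1)) : factorsZ w m :=
  ⟨dropFirst u.1, by
    obtain ⟨k, hk⟩ := mem_factorsZ_iff.mp u.2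
    rw [hk, dropFirst_window]; exact windowZ_mem w m (k + 1)⟩

@[simp] lemma ΦL_val (w : ℤ → A) (m : ℕ) (u : factorsZ w (m + 1)) :
    (ΦL w m u).1 = dropLast u.1 := rfl

@[simp] lemma ΦR_val (w : ℤ → A) (m : ℕ) (u : factorsZ w (m + 1)) :
    (ΦR w m u).1 = dropFirst u.1 := rfl

lemma ΦL_surj (w : ℤ → A) (m : ℕ) : Function.Surjective (ΦL w m) := by
  rintro ⟨v, hv⟩
  obtain ⟨k, rfl⟩ := mem_factorsZ_iff.mp hv
  exact ⟨⟨windowZ w (m + 1) k, windowZ_mem w (m + 1) k⟩,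
    Subtype.ext (dropLast_window w m k)⟩

lemma ΦR_surj (w : ℤ → A) (m : ℕ) : Function.Surjective (ΦR w m) := by
  rintro ⟨v, hv⟩
  obtain ⟨k, rfl⟩ := mem_factorsZ_iff.mp hv
  refine ⟨⟨windowZ w (m + 1) (k - 1), windowZ_mem w (m + 1) (k - 1)⟩,
    Subtype.ext ?_⟩
  rw [ΦR_val]
  show dropFirst _ = _
  rw [dropFirst_window]
  norm_num

variable [Fintype A]

lemma complexity_mono (w : ℤ → A) (m : ℕ) : complexityZ w m ≤ complexityZ w (m + 1) :=
  Nat.card_le_card_of_surjective _ (ΦL_surj w m)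

lemma complexity_pos (w : ℤ → A) (m : ℕ) : 1 ≤ complexityZ w m := by
  have : Nonempty (factorsZ w m) := ⟨⟨_, windowZ_mem w m 0⟩⟩
  exact Nat.card_pos

/-- If `complexityZ w m = complexityZ w (m+1)` and `1 ≤ m`, then two equal windows
propagate to a period. -/
lemma period_of_eq (w : ℤ → A) (m : ℕ) (hm : 1 ≤ m)
    (heq : complexityZ w m = complexityZ w (m + 1)) :
    ∃ k : ℤ, 1 ≤ k ∧ ∀ i : ℤ, w (i + k) = w i := by
  have hLinj : Function.Injective (ΦL w m) :=
    ((Nat.bijective_iff_surjective_and_card _).mpr ⟨ΦL_surj w m, heq.symm⟩).1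
  have hRinj : Function.Injective (ΦR w m) :=
    ((Nat.bijective_iff_surjective_and_card _).mpr ⟨ΦR_surj w m, heq.symm⟩).1
  -- window equality propagation
  have stepF : ∀ a b : ℤ, windowZ w m a = windowZ w m b →
      windowZ w m (a + 1) = windowZ w m (b + 1) := by
    intro a b hab
    have : ΦL w m ⟨windowZ w (m+1) a, windowZ_mem w (m+1) a⟩ =
        ΦL w m ⟨windowZ w (m+1) b, windowZ_mem w (m+1) b⟩ := by
      apply Subtype.ext
      rw [ΦL_val, ΦL_val]
      show dropLast _ = dropLast _
      rw [dropLast_window, dropLast_window, hab]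
    have h2 := congrArg Subtype.val (hLinj this)
    have h3 := congrArg dropFirst h2
    rwa [dropFirst_window, dropFirst_window] at h3
  have stepB : ∀ a b : ℤ, windowZ w m a = windowZ w m b →
      windowZ w m (a - 1) = windowZ w m (b - 1) := by
    intro a b hab
    have : ΦR w m ⟨windowZ w (m+1) (a-1), windowZ_mem w (m+1) (a-1)⟩ =
        ΦR w m ⟨windowZ w (m+1) (b-1), windowZ_mem w (m+1) (b-1)⟩ := by
      apply Subtype.ext
      rw [ΦR_val, ΦR_val]
      show dropFirst _ = dropFirst _
      rw [dropFirst_window, dropFirst_window]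
      norm_num [hab]
    have h2 := congrArg Subtype.val (hRinj this)
    have h3 := congrArg dropLast h2
    rwa [dropLast_window, dropLast_window] at h3
  -- pigeonhole
  obtain ⟨t1, t2, hne, hft⟩ :
      ∃ t1 t2 : ℕ, t1 ≠ t2 ∧ windowZ w m (t1 : ℤ) = windowZ w m (t2 : ℤ) := by
    obtain ⟨t1, t2, hne, h12⟩ := Finite.exists_ne_map_eq_of_infinite
      (fun t : ℕ => (⟨windowZ w m (t : ℤ), windowZ_mem w m _⟩ : factorsZ w m))
    exact ⟨t1, t2, hne, congrArg Subtype.val h12⟩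
  -- wlog t1 < t2
  obtain ⟨a, b, hab, hW⟩ : ∃ a b : ℤ, a < b ∧ windowZ w m a = windowZ w m b := by
    rcases Nat.lt_or_gt_of_ne hne with hlt | hlt
    · exact ⟨t1, t2, by exact_mod_cast hlt, hft⟩
    · exact ⟨t2, t1, by exact_mod_cast hlt, hft.symm⟩
  -- propagate to all shifts
  have key : ∀ t : ℤ, windowZ w m (a + t) = windowZ w m (b + t) := by
    intro t
    induction t using Int.induction_on with
    | zero => simpa using hW
    | succ i ih => have := stepF _ _ ih; rwa [add_assoc, add_assoc] at this
    | pred i ih =>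
        have := stepB _ _ ih
        have e1 : a + (-(i:ℤ)) - 1 = a + (-(i:ℤ) - 1) := by ring
        have e2 : b + (-(i:ℤ)) - 1 = b + (-(i:ℤ) - 1) := by ring
        rwa [e1, e2] at this
  refine ⟨b - a, by omega, fun i => ?_⟩
  have := key (i - a)
  have ha : a + (i - a) = i := by ring
  have hb : b + (i - a) = i + (b - a) := by ring
  rw [ha, hb] at this
  have := congrFun this (⟨0, hm⟩ : Fin m)
  simpa [windowZ] using this.symm

end MHaux

open MHaux in
/-- Morse–Hedlund, one direction: if `p_w(n) ≤ n` for some `n ≥ 1`,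
then `w` is periodic. -/
theorem stmt3 {A : Type*} [Fintype A] (w : ℤ → A) (n : ℕ) (hn : 1 ≤ n)
    (h : complexityZ w n ≤ n) :
    ∃ k : ℤ, 1 ≤ k ∧ ∀ i : ℤ, w (i + k) = w i := by
  by_cases hc : complexityZ w 1 = 1
  · -- w is constant
    have hsub : Subsingleton (factorsZ w 1) :=
      ((Nat.card_eq_one_iff_unique).mp hc).1
    refine ⟨1, le_refl _, fun i => ?_⟩
    have := hsub.elim ⟨windowZ w 1 (i + 1), windowZ_mem w 1 (i + 1)⟩
      ⟨windowZ w 1 i, windowZ_mem w 1 i⟩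
    have h2 := congrFun (congrArg Subtype.val this) (0 : Fin 1)
    simpa [windowZ] using h2
  · have h1 : 2 ≤ complexityZ w 1 := by
      have := complexity_pos w 1; omega
    -- find m with equal complexity
    by_cases hex : ∃ m, 1 ≤ m ∧ m < n ∧ complexityZ w m = complexityZ w (m + 1)
    · obtain ⟨m, hm1, _, heq⟩ := hex
      exact period_of_eq w m hm1 heq
    · exfalso
      push_neg at hex
      have grow : ∀ m, 1 ≤ m → m ≤ n → m + 1 ≤ complexityZ w m := by
        intro m
        induction m with
        | zero => omega
        | succ m ih =>
          intro _ hmn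
          rcases Nat.eq_zero_or_pos m with h1' | hm1
          · subst h1'; exact h1
          · 
            have := ih hm1 (by omega)
            have hne := hex m hm1 (by omega)
            have hmono := complexity_mono w m
            omega
      have := grow n hn le_rfl
      omega
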